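/- Let Lx, Ly, m and N be positive integers with m ≤ min(Lx, Ly) − 1 and 2 ≤ N ≤ Lx·Ly. If N sites of the Lx × Ly lattice are occupied uniformly at random (averaging over all N-element subsets of the Lx·Ly sites), then the expected number of unordered pairs of occupied sites at taxicab distance exactly m equals (N/(Lx·Ly))·((N−1)/(Lx·Ly − 1))·(2mLxLy − (Lx + Ly)m² + (m³ − m)/3). -/

import Mathlib

/-- The site set of the `Lx × Ly` square lattice. -/
def latticeSites (Lx Ly : ℕ) : Finset (ℕ × ℕ) :=
  Finset.range Lx ×ˢ Finset.range Ly

/-- The (non-periodic) taxicab distance between two lattice sites. -/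
def taxicabDist (a b : ℕ × ℕ) : ℕ :=
  Nat.dist a.1 b.1 + Nat.dist a.2 b.2

/-- The number of unordered pairs of occupied sites (of a configuration `M`) at taxicab
distance exactly `m`. -/
def pairCount (m : ℕ) (M : Finset (ℕ × ℕ)) : ℕ :=
  ((M.powersetCard 2).filter
    (fun p => ∃ a ∈ p, ∃ b ∈ p, a ≠ b ∧ taxicabDist a b = m)).card

lemma count1D (L k : ℕ) (hk : 0 < k) :
    ((Finset.range L ×ˢ Finset.range L).filter (fun p => Nat.dist p.1 p.2 = k)).card
      = 2 * (L - k) := by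
  rw [Finset.card_filter, Finset.sum_product]
  have key : ∀ i ∈ Finset.range L,
      (∑ j ∈ Finset.range L, if Nat.dist i j = k then (1:ℕ) else 0)
        = (if i + k < L then 1 else 0) + (if k ≤ i then 1 else 0) := by
    intro i hi
    simp only [Finset.mem_range] at hi
    have : ∀ j, (if Nat.dist i j = k then (1:ℕ) else 0)
        = (if j = i + k then 1 else 0) + (if k ≤ i ∧ j = i - k then 1 else 0) := by
      intro j; split_ifs <;> simp only [Nat.dist] at * <;> omega
    simp only [this, Finset.sum_add_distrib]
    rw [Finset.sum_ite_eq' (Finset.range L) (i + k) (fun _ => (1:ℕ))]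
    congr 1
    · simp [Finset.mem_range]
    · by_cases h : k ≤ i
      · simp only [h, true_and]
        rw [Finset.sum_ite_eq' (Finset.range L) (i - k) (fun _ => (1:ℕ))]
        simp [Finset.mem_range]; omega
      · simp [h]
  rw [Finset.sum_congr rfl key, Finset.sum_add_distrib]
  have h1 : (∑ i ∈ Finset.range L, if i + k < L then (1:ℕ) else 0) = L - k := by
    rw [← Finset.card_filter]
    have : (Finset.range L).filter (fun i => i + k < L) = Finset.range (L - k) := by
      ext i; simp only [Finset.mem_filter, Finset.mem_range]; omega
    rw [this, Finset.card_range]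
  have h2 : (∑ i ∈ Finset.range L, if k ≤ i then (1:ℕ) else 0) = L - k := by
    rw [← Finset.card_filter]
    have hsplit := Finset.card_filter_add_card_filter_not (s := Finset.range L)
      (p := fun i => k ≤ i)
    have : (Finset.range L).filter (fun i => ¬ k ≤ i) = Finset.range (min k L) := by
      ext i; simp only [Finset.mem_filter, Finset.mem_range]; omega
    rw [this, Finset.card_range, Finset.card_range] at hsplit
    omega
  rw [h1, h2]; omega
lemma quadSum (a b c : ℚ) (n : ℕ) :
    ∑ k ∈ Finset.range n, (a + b*(k:ℚ) + c*(k:ℚ)^2)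
      = n*a + b*(n*(n-1)/2) + c*(n*(n-1)*(2*n-1)/6) := by
  induction n with
  | zero => simp
  | succ n ih => rw [Finset.sum_range_succ, ih]; push_cast; ring

lemma count1D0 (L : ℕ) :
    ((Finset.range L ×ˢ Finset.range L).filter (fun p => Nat.dist p.1 p.2 = 0)).card = L := by
  have : (Finset.range L ×ˢ Finset.range L).filter (fun p => Nat.dist p.1 p.2 = 0)
      = (Finset.range L).diag := by
    ext p
    simp only [Finset.mem_filter, Finset.mem_product, Finset.mem_diag, Finset.mem_range]
    simp only [Nat.dist]
    omega
  rw [this, Finset.diag_card, Finset.card_range]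
lemma count2D (Lx Ly m : ℕ) :
    (((latticeSites Lx Ly) ×ˢ (latticeSites Lx Ly)).filter
      (fun p => taxicabDist p.1 p.2 = m)).card
    = ∑ k ∈ Finset.range (m+1),
        ((Finset.range Lx ×ˢ Finset.range Lx).filter (fun p => Nat.dist p.1 p.2 = k)).card *
        ((Finset.range Ly ×ˢ Finset.range Ly).filter (fun p => Nat.dist p.1 p.2 = (m-k))).card := by
  classical
  set X := Finset.range Lx
  set Y := Finset.range Ly
  set E := ((X ×ˢ X) ×ˢ (Y ×ˢ Y)).filter
      (fun q => Nat.dist q.1.1 q.1.2 + Nat.dist q.2.1 q.2.2 = m) with hE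
  have hcard : (((latticeSites Lx Ly) ×ˢ (latticeSites Lx Ly)).filter
      (fun p => taxicabDist p.1 p.2 = m)).card = E.card := by
    apply Finset.card_nbij' (fun p => ((p.1.1, p.2.1), (p.1.2, p.2.2)))
      (fun q => ((q.1.1, q.2.1), (q.1.2, q.2.2)))
    · intro p hp
      simp only [hE, latticeSites, Finset.mem_coe, Finset.mem_filter, Finset.mem_product] at hp ⊢
      exact ⟨⟨⟨hp.1.1.1, hp.1.2.1⟩, hp.1.1.2, hp.1.2.2⟩, hp.2⟩
    · intro q hq
      simp only [hE, latticeSites, Finset.mem_coe, Finset.mem_filter, Finset.mem_product] at hq ⊢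
      simp only [taxicabDist]
      exact ⟨⟨⟨hq.1.1.1, hq.1.2.1⟩, hq.1.1.2, hq.1.2.2⟩, hq.2⟩
    · intro p _; rfl
    · intro q _; rfl
  rw [hcard]
  rw [Finset.card_eq_sum_card_fiberwise
    (f := fun q => Nat.dist q.1.1 q.1.2) (t := Finset.range (m+1))
    (fun q hq => by
      simp only [hE, Finset.mem_coe, Finset.mem_filter] at hq
      simp only [Finset.mem_coe, Finset.mem_range]; omega)]
  refine Finset.sum_congr rfl fun k hk => ?_
  simp only [Finset.mem_range] at hk
  have : E.filter (fun q => Nat.dist q.1.1 q.1.2 = k)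
      = ((X ×ˢ X).filter (fun p => Nat.dist p.1 p.2 = k)) ×ˢ
        ((Y ×ˢ Y).filter (fun p => Nat.dist p.1 p.2 = (m - k))) := by
    rw [hE, Finset.filter_filter, ← Finset.filter_product]
    apply Finset.filter_congr
    intro q _
    constructor
    · rintro ⟨h1, h2⟩; exact ⟨h2, by omega⟩
    · rintro ⟨h1, h2⟩; exact ⟨by omega, h1⟩
  rw [this, Finset.card_product]
lemma Dcard (Lx Ly m : ℕ) (hm : 0 < m) (hx : m + 1 ≤ Lx) (hy : m + 1 ≤ Ly) :
    ((((latticeSites Lx Ly) ×ˢ (latticeSites Lx Ly)).filter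
        (fun p => taxicabDist p.1 p.2 = m)).card : ℚ)
      = 2 * (2*m*Lx*Ly - (Lx+Ly)*(m:ℚ)^2 + ((m:ℚ)^3 - m)/3) := by
  obtain ⟨m', rfl⟩ : ∃ m', m = m' + 1 := ⟨m - 1, by omega⟩
  rw [count2D, Finset.sum_range_succ, Finset.sum_range_succ']
  have e1 : m' + 1 - (m' + 1) = 0 := by omega
  have e2 : m' + 1 - 0 = m' + 1 := by omega
  rw [e1, e2, count1D0 Lx, count1D0 Ly, count1D Ly (m'+1) (by omega),
      count1D Lx (m'+1) (by omega)]
  have hmid : ∀ k ∈ Finset.range m',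
      ((((Finset.range Lx ×ˢ Finset.range Lx).filter
            (fun p => Nat.dist p.1 p.2 = (k+1))).card : ℚ) *
       (((Finset.range Ly ×ˢ Finset.range Ly).filter
            (fun p => Nat.dist p.1 p.2 = (m'-k))).card : ℚ))
      = (4*((Lx:ℚ)-1)*((Ly:ℚ)-m'))
        + (4*(((Lx:ℚ)-1)-((Ly:ℚ)-m')))*(k:ℚ) + (-4)*(k:ℚ)^2 := by
    intro k hk
    simp only [Finset.mem_range] at hk
    rw [count1D Lx (k+1) (by omega), count1D Ly (m'-k) (by omega)]
    have h1 : k + 1 ≤ Lx := by omega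
    have h2 : m' - k ≤ Ly := by omega
    have h3 : k ≤ m' := by omega
    push_cast [Nat.cast_sub h1, Nat.cast_sub h2, Nat.cast_sub h3]
    ring
  push_cast
  rw [Finset.sum_congr rfl hmid, quadSum]
  have hc1 : ((Lx - (m'+1) : ℕ) : ℚ) = (Lx:ℚ) - (m'+1) := by
    rw [Nat.cast_sub (by omega : m' + 1 ≤ Lx)]; push_cast; ring
  have hc2 : ((Ly - (m'+1) : ℕ) : ℚ) = (Ly:ℚ) - (m'+1) := by
    rw [Nat.cast_sub (by omega : m' + 1 ≤ Ly)]; push_cast; ring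
  rw [hc1, hc2]
  push_cast
  ring
lemma taxicab_comm (a b : ℕ × ℕ) : taxicabDist a b = taxicabDist b a := by
  simp [taxicabDist, Nat.dist_comm]

lemma ordered_eq_two_mul_unordered (Lx Ly m : ℕ) (hm : 0 < m) :
    (((latticeSites Lx Ly) ×ˢ (latticeSites Lx Ly)).filter
        (fun p => taxicabDist p.1 p.2 = m)).card
    = 2 * (((latticeSites Lx Ly).powersetCard 2).filter
        (fun p => ∃ a ∈ p, ∃ b ∈ p, a ≠ b ∧ taxicabDist a b = m)).card := by
  classical
  set L := latticeSites Lx Ly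
  set D := ((L ×ˢ L).filter (fun p => taxicabDist p.1 p.2 = m)) with hD
  set P := ((L.powersetCard 2).filter
      (fun p => ∃ a ∈ p, ∃ b ∈ p, a ≠ b ∧ taxicabDist a b = m)) with hP
  have hmap : ∀ x ∈ D, ({x.1, x.2} : Finset (ℕ × ℕ)) ∈ P := by
    intro x hx
    simp only [hD, Finset.mem_filter, Finset.mem_product] at hx
    have hne : x.1 ≠ x.2 := by
      intro h
      rw [h] at hx
      simp [taxicabDist, Nat.dist_self] at hx
      omega
    simp only [hP, Finset.mem_filter, Finset.mem_powersetCard]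
    refine ⟨⟨?_, Finset.card_pair hne⟩, x.1, by simp, x.2, by simp, hne, hx.2⟩
    intro y hy
    simp only [Finset.mem_insert, Finset.mem_singleton] at hy
    rcases hy with h | h <;> subst h
    · exact hx.1.1
    · exact hx.1.2
  rw [Finset.card_eq_sum_card_fiberwise hmap]
  rw [Finset.sum_congr rfl (fun p hp => ?_), Finset.sum_const, smul_eq_mul, mul_comm]
  -- show each fiber has card 2
  simp only [hP, Finset.mem_filter, Finset.mem_powersetCard] at hp
  obtain ⟨⟨hsub, hcard⟩, a, ha, b, hb, hab, hdist⟩ := hp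
  obtain ⟨u, v, huv, hpuv⟩ := Finset.card_eq_two.mp hcard
  -- a b ∈ p = {u,v}, a ≠ b, so {a,b} = {u,v} and dist u v = m
  have hduv : taxicabDist u v = m := by
    subst hpuv
    simp only [Finset.mem_insert, Finset.mem_singleton] at ha hb
    rcases ha with rfl | rfl <;> rcases hb with rfl | rfl
    · exact absurd rfl hab
    · exact hdist
    · rw [taxicab_comm]; exact hdist
    · exact absurd rfl hab
  have hfib : D.filter (fun x => ({x.1, x.2} : Finset (ℕ × ℕ)) = p)
      = {(u, v), (v, u)} := by
    subst hpuv
    ext x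
    simp only [Finset.mem_filter, Finset.mem_insert, Finset.mem_singleton, hD,
      Finset.mem_product]
    constructor
    · rintro ⟨⟨⟨h1, h2⟩, h3⟩, h4⟩
      have hx12 : x.1 ≠ x.2 := by
        intro h
        rw [h] at h3
        simp [taxicabDist, Nat.dist_self] at h3
        omega
      have hm1 : x.1 = u ∨ x.1 = v := by
        have : x.1 ∈ ({u, v} : Finset (ℕ × ℕ)) := h4 ▸ (by simp)
        simpa using this
      have hm2 : x.2 = u ∨ x.2 = v := by
        have : x.2 ∈ ({u, v} : Finset (ℕ × ℕ)) := h4 ▸ (by simp)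
        simpa using this
      rcases hm1 with e1 | e1 <;> rcases hm2 with e2 | e2
      · exact absurd (e1.trans e2.symm) hx12
      · left; exact Prod.ext e1 e2
      · right; exact Prod.ext e1 e2
      · exact absurd (e1.trans e2.symm) hx12
    · rintro (rfl | rfl)
      · have hu : u ∈ L := hsub (by simp)
        have hv : v ∈ L := hsub (by simp)
        exact ⟨⟨⟨hu, hv⟩, hduv⟩, rfl⟩
      · have hu : u ∈ L := hsub (by simp)
        have hv : v ∈ L := hsub (by simp)
        exact ⟨⟨⟨hv, hu⟩, by rw [taxicab_comm]; exact hduv⟩,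
          by rw [Finset.pair_comm]⟩
  rw [hfib]
  rw [Finset.card_insert_of_notMem (by simp [huv, Prod.ext_iff]), Finset.card_singleton]
lemma card_supersets {α : Type*} [DecidableEq α] (L p : Finset α) (N : ℕ)
    (hp : p ⊆ L) (hpN : p.card ≤ N) :
    ((L.powersetCard N).filter (fun M => p ⊆ M)).card
      = (L.card - p.card).choose (N - p.card) := by
  classical
  rw [← Finset.card_sdiff_of_subset hp, ← Finset.card_powersetCard]
  apply Finset.card_nbij' (fun M => M \ p) (fun M' => M' ∪ p)
  · intro M hM
    simp only [Finset.mem_coe, Finset.mem_filter, Finset.mem_powersetCard] at hM ⊢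
    obtain ⟨⟨hML, hMc⟩, hpM⟩ := hM
    exact ⟨fun x hx => by
      simp only [Finset.mem_sdiff] at hx ⊢
      exact ⟨hML hx.1, hx.2⟩, by rw [Finset.card_sdiff_of_subset hpM, hMc]⟩
  · intro M' hM'
    simp only [Finset.mem_coe, Finset.mem_filter, Finset.mem_powersetCard, Finset.mem_sdiff] at hM' ⊢
    obtain ⟨hsub, hcard⟩ := hM'
    have hdisj : Disjoint M' p := by
      rw [Finset.disjoint_left]
      intro x hx
      exact (Finset.mem_sdiff.mp (hsub hx)).2
    constructor
    · constructor
      · intro x hx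
        simp only [Finset.mem_union] at hx
        rcases hx with h | h
        · exact (Finset.mem_sdiff.mp (hsub h)).1
        · exact hp h
      · rw [Finset.card_union_of_disjoint hdisj, hcard]
        omega
    · exact Finset.subset_union_right
  · intro M hM
    simp only [Finset.mem_coe, Finset.mem_filter, Finset.mem_powersetCard] at hM
    exact Finset.sdiff_union_of_subset hM.2
  · intro M' hM'
    simp only [Finset.mem_coe, Finset.mem_powersetCard, Finset.mem_sdiff] at hM'
    apply Finset.union_sdiff_cancel_right
    rw [Finset.disjoint_left]
    intro x hx
    exact (Finset.mem_sdiff.mp (hM'.1 hx)).2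
lemma sum_pairCount (Lx Ly m N : ℕ) (hN : 2 ≤ N) :
    ∑ M ∈ (latticeSites Lx Ly).powersetCard N, pairCount m M
      = (((latticeSites Lx Ly).powersetCard 2).filter
          (fun p => ∃ a ∈ p, ∃ b ∈ p, a ≠ b ∧ taxicabDist a b = m)).card
        * ((latticeSites Lx Ly).card - 2).choose (N - 2) := by
  classical
  set L := latticeSites Lx Ly
  set P := ((L.powersetCard 2).filter
      (fun p => ∃ a ∈ p, ∃ b ∈ p, a ≠ b ∧ taxicabDist a b = m)) with hP
  have step1 : ∀ M ∈ L.powersetCard N, pairCount m M = (P.filter (· ⊆ M)).card := by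
    intro M hM
    simp only [Finset.mem_powersetCard] at hM
    unfold pairCount
    congr 1
    ext p
    simp only [hP, Finset.mem_filter, Finset.mem_powersetCard]
    constructor
    · rintro ⟨⟨h1, h2⟩, h3⟩
      exact ⟨⟨⟨h1.trans hM.1, h2⟩, h3⟩, h1⟩
    · rintro ⟨⟨⟨h1, h2⟩, h3⟩, h4⟩
      exact ⟨⟨h4, h2⟩, h3⟩
  rw [Finset.sum_congr rfl step1]
  have step2 : ∀ M ∈ L.powersetCard N,
      (P.filter (· ⊆ M)).card = ∑ p ∈ P, if p ⊆ M then 1 else 0 := by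
    intro M _; rw [Finset.card_filter]
  rw [Finset.sum_congr rfl step2, Finset.sum_comm]
  have step3 : ∀ p ∈ P,
      (∑ M ∈ L.powersetCard N, if p ⊆ M then 1 else 0)
        = (L.card - 2).choose (N - 2) := by
    intro p hp
    simp only [hP, Finset.mem_filter, Finset.mem_powersetCard] at hp
    rw [← Finset.card_filter]
    have := card_supersets L p N hp.1.1 (by omega)
    rwa [hp.1.2] at this
  rw [Finset.sum_congr rfl step3, Finset.sum_const, smul_eq_mul]

lemma choose_identity (S N : ℕ) (hN : 2 ≤ N) (hNS : N ≤ S) :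
    S.choose N * (N * (N - 1)) = (S - 2).choose (N - 2) * (S * (S - 1)) := by
  obtain ⟨n, rfl⟩ : ∃ n, N = n + 2 := ⟨N - 2, by omega⟩
  obtain ⟨s, rfl⟩ : ∃ s, S = s + 2 := ⟨S - 2, by omega⟩
  have h1 := Nat.add_one_mul_choose_eq s n
  have h2 := Nat.add_one_mul_choose_eq (s+1) (n+1)
  have e1 : n + 2 - 2 = n := by omega
  have e2 : s + 2 - 2 = s := by omega
  rw [e1, e2]
  have e3 : n + 2 - 1 = n + 1 := by omega
  have e4 : s + 2 - 1 = s + 1 := by omega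
  rw [e3, e4]
  nlinarith [h1, h2]

/-- If `N` sites of the `Lx × Ly` lattice are occupied uniformly at random, the expected
number of unordered pairs of occupied sites at taxicab distance exactly `m` is
`(N/(Lx Ly)) ((N−1)/(Lx Ly − 1)) (2 m Lx Ly − (Lx + Ly) m² + (m³ − m)/3)`. -/
theorem expected_nonperiodic_taxicab_pair_count (Lx Ly m N : ℕ)
    (hLx : 0 < Lx) (hLy : 0 < Ly) (hm : 0 < m) (hmle : m ≤ min Lx Ly - 1)
    (hN : 2 ≤ N) (hNle : N ≤ Lx * Ly) :
    (∑ M ∈ (latticeSites Lx Ly).powersetCard N, (pairCount m M : ℚ))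
        / ((Lx * Ly).choose N)
      = ((N : ℚ) / ((Lx : ℚ) * (Ly : ℚ))) * (((N : ℚ) - 1) / ((Lx : ℚ) * (Ly : ℚ) - 1)) *
        (2 * m * Lx * Ly - (Lx + Ly) * (m : ℚ) ^ 2 + ((m : ℚ) ^ 3 - m) / 3) := by
  have hx : m + 1 ≤ Lx := by omega
  have hy : m + 1 ≤ Ly := by omega
  have hS2 : 2 ≤ Lx * Ly := le_trans hN hNle
  have hLcard : (latticeSites Lx Ly).card = Lx * Ly := by
    simp [latticeSites]
  -- P.card as rational
  have hPQ : (((((latticeSites Lx Ly).powersetCard 2).filter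
        (fun p => ∃ a ∈ p, ∃ b ∈ p, a ≠ b ∧ taxicabDist a b = m)).card : ℚ))
      = 2*m*Lx*Ly - (Lx+Ly)*(m:ℚ)^2 + ((m:ℚ)^3 - m)/3 := by
    have h1 := Dcard Lx Ly m hm hx hy
    rw [ordered_eq_two_mul_unordered Lx Ly m hm] at h1
    push_cast at h1
    linarith
  have hsum : (∑ M ∈ (latticeSites Lx Ly).powersetCard N, (pairCount m M : ℚ))
      = ((∑ M ∈ (latticeSites Lx Ly).powersetCard N, pairCount m M : ℕ) : ℚ) := by
    push_cast; rfl
  rw [hsum, sum_pairCount Lx Ly m N hN, hLcard]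
  have hid := choose_identity (Lx * Ly) N hN hNle
  have hidQ : ((Lx * Ly).choose N : ℚ) * ((N:ℚ) * ((N:ℚ) - 1))
      = ((Lx * Ly - 2).choose (N - 2) : ℚ) * (((Lx:ℚ) * Ly) * ((Lx:ℚ) * Ly - 1)) := by
    have := congrArg (fun x : ℕ => (x : ℚ)) hid
    push_cast [Nat.cast_sub (by omega : 1 ≤ N), Nat.cast_sub (by omega : 1 ≤ Lx * Ly)] at this
    convert this using 2 <;> push_cast <;> ring
  have hC : ((Lx * Ly).choose N : ℚ) ≠ 0 := by
    have := Nat.choose_pos hNle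
    positivity
  have hS0 : (Lx:ℚ) * Ly ≠ 0 := by positivity
  have hS1 : (Lx:ℚ) * Ly - 1 ≠ 0 := by
    have : (2:ℚ) ≤ (Lx:ℚ) * Ly := by exact_mod_cast hS2
    intro h; linarith
  have hSS : ((Lx:ℚ) * Ly) * ((Lx:ℚ) * Ly - 1) ≠ 0 := mul_ne_zero hS0 hS1
  have key : (((Lx * Ly - 2).choose (N - 2) : ℕ) : ℚ) / (((Lx * Ly).choose N : ℕ) : ℚ)
      = ((N:ℚ) * ((N:ℚ) - 1)) / (((Lx:ℚ) * Ly) * ((Lx:ℚ) * Ly - 1)) := by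
    rw [div_eq_div_iff hC hSS]
    linear_combination -hidQ
  push_cast
  rw [hPQ, mul_div_assoc, key]
  field_simp
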